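/- Let n ≥ 1, let B(F) ⊆ GL_{2n}(F) be the subgroup of invertible upper triangular matrices, let w ∈ GL_{2n}(O) be the 2n×2n antidiagonal permutation matrix, let J be the parahoric subgroup and t := ι(ϖ·1_n, 1_n). Let χ : B(F) → ℂ^× be a homomorphism trivial on B(F) ∩ GL_{2n}(O), and let f : GL_{2n}(F) → ℂ satisfy f(b·g·k) = χ(b)·f(g) for all b ∈ B(F), g ∈ GL_{2n}(F), k ∈ J, and f(g) = 0 whenever g ∉ B(F)·w·J. Let Rep ⊆ M_n(O) be any set of representatives of M_n(O)/ϖM_n(O). Then for every g ∈ GL_{2n}(F): Σ_{m ∈ Rep} f(g·[[1_n, m],[0, 1_n]]·t) = χ(ι(1_n, ϖ·1_n))·f(g). (That is, f is an eigenvector of the Hecke operator U = [J t J] with the indicated eigenvalue.) -/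

import Mathlib

open Matrix


/-- The block diagonal matrix `ι(A, D) = [[A, 0], [0, D]]`. -/
def iotaBlk {n : ℕ} {R : Type*} [CommRing R] (A D : Matrix (Fin n) (Fin n) R) :
    Matrix (Fin n ⊕ Fin n) (Fin n ⊕ Fin n) R :=
  Matrix.fromBlocks A 0 0 D

/-- The matrix `t(a) = ι(a·1_n, 1_n)`. -/
def tMat (n : ℕ) (R : Type*) [CommRing R] (a : R) :
    Matrix (Fin n ⊕ Fin n) (Fin n ⊕ Fin n) R :=
  iotaBlk (a • (1 : Matrix (Fin n) (Fin n) R)) 1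

/-- The `2n × 2n` antidiagonal permutation matrix (indices via `finSumFinEquiv`). -/
def wFull (n : ℕ) (R : Type*) [CommRing R] :
    Matrix (Fin n ⊕ Fin n) (Fin n ⊕ Fin n) R :=
  fun i j => if (finSumFinEquiv i : ℕ) + (finSumFinEquiv j : ℕ) + 1 = n + n then 1 else 0

/-- Membership in `B(F)`: invertible upper triangular `2n × 2n` matrix. -/
def UpperTriInv {n : ℕ} {F : Type*} [Field F]
    (b : Matrix (Fin n ⊕ Fin n) (Fin n ⊕ Fin n) F) : Prop :=
  IsUnit b ∧ ∀ i j : Fin n ⊕ Fin n,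
    (finSumFinEquiv j : ℕ) < (finSumFinEquiv i : ℕ) → b i j = 0

/-- Membership in `GL_{2n}(O)` for a subring `O ⊆ F`. -/
def inGLOS {n : ℕ} {F : Type*} [Field F] (O : Subring F)
    (g : Matrix (Fin n ⊕ Fin n) (Fin n ⊕ Fin n) F) : Prop :=
  ∃ g', g * g' = 1 ∧ g' * g = 1 ∧ (∀ i j, g i j ∈ O) ∧ (∀ i j, g' i j ∈ O)

/-- Membership in the parahoric subgroup `J` of type `(n,n)`. -/
def inParahoricS {n : ℕ} {F : Type*} [Field F] (O : Subring F) (ϖ : F)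
    (g : Matrix (Fin n ⊕ Fin n) (Fin n ⊕ Fin n) F) : Prop :=
  inGLOS O g ∧ ∀ i j : Fin n, ∃ c ∈ O, g (Sum.inr i) (Sum.inl j) = ϖ * c


section Aux
variable {F : Type*} [Field F] {O : Subring F}

lemma matMulMem {ι κ σ : Type*} [Fintype κ] {M : Matrix ι κ F} {N : Matrix κ σ F}
    (hM : ∀ i j, M i j ∈ O) (hN : ∀ i j, N i j ∈ O) : ∀ i j, (M * N) i j ∈ O := by
  intro i j
  rw [Matrix.mul_apply]
  exact sum_mem fun l _ => mul_mem (hM i l) (hN l j)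

lemma detMem {ι : Type*} [Fintype ι] [DecidableEq ι] {M : Matrix ι ι F}
    (h : ∀ i j, M i j ∈ O) : M.det ∈ O := by
  rw [Matrix.det_apply]
  exact sum_mem fun σ _ => zsmul_mem (prod_mem fun i _ => h _ _) _

/-- explicit O-inverse from entries + unit determinant -/
lemma GLO_of {ι : Type*} [Fintype ι] [DecidableEq ι] {M : Matrix ι ι F}
    (hM : ∀ i j, M i j ∈ O) {y : F} (hy : y ∈ O) (hdet : M.det * y = 1) :
    ∃ M', M * M' = 1 ∧ M' * M = 1 ∧ ∀ i j, M' i j ∈ O := by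
  refine ⟨y • M.adjugate, ?_, ?_, ?_⟩
  · rw [Matrix.mul_smul, Matrix.mul_adjugate, smul_smul, mul_comm y, hdet, one_smul]
  · rw [Matrix.smul_mul, Matrix.adjugate_mul, smul_smul, mul_comm y, hdet, one_smul]
  · intro i j
    rw [Matrix.smul_apply, smul_eq_mul]
    refine mul_mem hy ?_
    rw [Matrix.adjugate_apply]
    refine detMem ?_
    intro a b
    rw [Matrix.updateRow_apply]
    split
    · by_cases hb : b = i <;> simp [Pi.single_apply, hb, one_mem, zero_mem]
    · exact hM a b

end Aux

section Aux2
variable {F : Type*} [Field F] {O : Subring F} {ϖ : F} {v : F → ℤ}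

lemma unit_of_one_add
    (hϖ0 : ϖ ≠ 0)
    (hv_mul : ∀ x y : F, x ≠ 0 → y ≠ 0 → v (x * y) = v x + v y)
    (hv_ϖ : v ϖ = 1)
    (hv_O : ∀ x : F, x ≠ 0 → (x ∈ O ↔ 0 ≤ v x))
    (hϖO : ϖ ∈ O) {c : F} (hc : c ∈ O) :
    1 + ϖ * c ≠ 0 ∧ (1 + ϖ * c)⁻¹ ∈ O := by
  have hv1 : v 1 = 0 := by
    have := hv_mul 1 1 one_ne_zero one_ne_zero
    rw [one_mul] at this; omega
  have hvinv : ∀ x : F, x ≠ 0 → v x⁻¹ = -v x := by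
    intro x hx
    have := hv_mul x x⁻¹ hx (inv_ne_zero hx)
    rw [mul_inv_cancel₀ hx, hv1] at this; omega
  by_cases hc0 : c = 0
  · subst hc0
    simp only [mul_zero, add_zero]
    exact ⟨one_ne_zero, by rw [inv_one]; exact one_mem O⟩
  set s := 1 + ϖ * c with hs
  have hmemO : ∀ x : F, x ∈ O → x ≠ 0 → 0 ≤ v x := fun x hx hx0 => (hv_O x hx0).mp hx
  have hsne : s ≠ 0 := by
    intro h0
    have h1 : (1 : F) = ϖ * (-c) := by
      have : 1 + ϖ * c = 0 := h0
      rw [mul_neg]; linear_combination this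
    have := hv_mul ϖ (-c) hϖ0 (neg_ne_zero.mpr hc0)
    rw [← h1, hv1, hv_ϖ] at this
    have := hmemO (-c) (neg_mem hc) (neg_ne_zero.mpr hc0)
    omega
  have hsO : s ∈ O := add_mem (one_mem O) (mul_mem hϖO hc)
  have hvs0 : 0 ≤ v s := hmemO s hsO hsne
  have hvs : v s = 0 := by
    by_contra hne
    have hvs1 : 1 ≤ v s := by omega
    set d := s * ϖ⁻¹ with hd
    have hdne : d ≠ 0 := mul_ne_zero hsne (inv_ne_zero hϖ0)
    have hvd : v d = v s - 1 := by
      rw [hd, hv_mul s ϖ⁻¹ hsne (inv_ne_zero hϖ0), hvinv ϖ hϖ0, hv_ϖ]; omega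
    have hdO : d ∈ O := (hv_O d hdne).mpr (by omega)
    have hsd : s = ϖ * d := by rw [hd]; field_simp
    have h1 : (1 : F) = ϖ * (d - c) := by linear_combination hsd - hs
    by_cases hdc : d - c = 0
    · rw [hdc, mul_zero] at h1; exact one_ne_zero h1
    · have := hv_mul ϖ (d - c) hϖ0 hdc
      rw [← h1, hv1, hv_ϖ] at this
      have := hmemO (d - c) (sub_mem hdO hc) hdc
      omega
  have hvsinv : v s⁻¹ = 0 := by rw [hvinv s hsne, hvs]; ring
  exact ⟨hsne, (hv_O s⁻¹ (inv_ne_zero hsne)).mpr (by omega)⟩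

end Aux2
section Aux3
variable {F : Type*} [Field F] {O : Subring F} {ϖ : F} {v : F → ℤ}

lemma parahoric_blockA
    (hϖO : ϖ ∈ O) (hϖ0 : ϖ ≠ 0)
    (hv_mul : ∀ x y : F, x ≠ 0 → y ≠ 0 → v (x * y) = v x + v y)
    (hv_ϖ : v ϖ = 1)
    (hv_O : ∀ x : F, x ≠ 0 → (x ∈ O ↔ 0 ≤ v x))
    {n : ℕ} {k : Matrix (Fin n ⊕ Fin n) (Fin n ⊕ Fin n) F}
    (hk : inParahoricS O ϖ k) :
    ∃ A', k.toBlocks₁₁ * A' = 1 ∧ A' * k.toBlocks₁₁ = 1 ∧ ∀ i j, A' i j ∈ O := by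
  obtain ⟨⟨k', hkk', hk'k, hkO, hk'O⟩, hdiv⟩ := hk
  let K : Matrix (Fin n ⊕ Fin n) (Fin n ⊕ Fin n) O :=
    Matrix.of (fun i j => (⟨k i j, hkO i j⟩ : O))
  let K' : Matrix (Fin n ⊕ Fin n) (Fin n ⊕ Fin n) O :=
    Matrix.of (fun i j => (⟨k' i j, hk'O i j⟩ : O))
  have hKmap : K.map O.subtype = k := by ext i j; rfl
  have hK'map : K'.map O.subtype = k' := by ext i j; rfl
  have hKK' : K * K' = 1 := by
    apply Matrix.map_injective (Subtype.val_injective (p := (· ∈ O)))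
    show (K * K').map O.subtype = (1 : Matrix _ _ O).map O.subtype
    rw [Matrix.map_mul, hKmap, hK'map, hkk',
      Matrix.map_one _ (map_zero O.subtype) (map_one O.subtype)]
  have detU : K.det * K'.det = 1 := by rw [← Matrix.det_mul, hKK', Matrix.det_one]
  let π : O := ⟨ϖ, hϖO⟩
  let I : Ideal O := Ideal.span {π}
  have hKCmap : K.toBlocks₂₁.map (Ideal.Quotient.mk I) = 0 := by
    ext i j
    show Ideal.Quotient.mk I (K.toBlocks₂₁ i j) = 0
    rw [Ideal.Quotient.eq_zero_iff_mem]
    obtain ⟨c, hc, hEq⟩ := hdiv i j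
    exact Ideal.mem_span_singleton.mpr ⟨⟨c, hc⟩, Subtype.ext hEq⟩
  have hdetbar : Ideal.Quotient.mk I K.det
      = Ideal.Quotient.mk I K.toBlocks₁₁.det * Ideal.Quotient.mk I K.toBlocks₂₂.det := by
    conv_lhs => rw [← Matrix.fromBlocks_toBlocks K]
    rw [RingHom.map_det, RingHom.mapMatrix_apply, Matrix.fromBlocks_map, hKCmap,
      Matrix.det_fromBlocks_zero₂₁, RingHom.map_det, RingHom.map_det,
      RingHom.mapMatrix_apply, RingHom.mapMatrix_apply]
  have h2 : Ideal.Quotient.mk I (K.toBlocks₁₁.det * (K.toBlocks₂₂.det * K'.det)) = 1 := by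
    rw [_root_.map_mul, _root_.map_mul, ← mul_assoc, ← hdetbar, ← _root_.map_mul, detU,
      _root_.map_one]
  have h3 : K.toBlocks₁₁.det * (K.toBlocks₂₂.det * K'.det) - 1 ∈ I := by
    rw [← Ideal.Quotient.eq_zero_iff_mem, RingHom.map_sub, h2, _root_.map_one, sub_self]
  obtain ⟨cO, hcO⟩ := Ideal.mem_span_singleton.mp h3
  have hdetA : ((K.toBlocks₁₁.det : O) : F) = (k.toBlocks₁₁).det := by
    have h5 : K.toBlocks₁₁.map O.subtype = k.toBlocks₁₁ := by ext i j; rfl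
    have h6 := O.subtype.map_det K.toBlocks₁₁
    rw [RingHom.mapMatrix_apply, h5] at h6
    exact h6
  have hFlevel : (k.toBlocks₁₁).det * ((K.toBlocks₂₂.det * K'.det : O) : F)
      = 1 + ϖ * (cO : F) := by
    have h7 := congrArg (fun x : O => (x : F)) hcO
    push_cast at h7
    rw [← hdetA]
    push_cast
    linear_combination h7
  obtain ⟨hsne, hsinv⟩ := unit_of_one_add (O := O) hϖ0 hv_mul hv_ϖ hv_O hϖO (SetLike.coe_mem cO)
  have hdet1 : (k.toBlocks₁₁).det *
      (((K.toBlocks₂₂.det * K'.det : O) : F) * (1 + ϖ * (cO : F))⁻¹) = 1 := by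
    rw [← mul_assoc, hFlevel, mul_inv_cancel₀ hsne]
  exact GLO_of (fun i j => hkO _ _) (mul_mem (SetLike.coe_mem _) hsinv) hdet1

end Aux3
section Aux4
variable {F : Type*} [Field F] {n : ℕ}

lemma eLval (i : Fin n) : ((finSumFinEquiv (Sum.inl i) : Fin (n + n)) : ℕ) = (i : ℕ) := by
  simp [finSumFinEquiv_apply_left]

lemma eRval (i : Fin n) : ((finSumFinEquiv (Sum.inr i) : Fin (n + n)) : ℕ) = n + (i : ℕ) := by
  simp [finSumFinEquiv_apply_right]; omega

lemma UpperTriInv.mul' {b b' : Matrix (Fin n ⊕ Fin n) (Fin n ⊕ Fin n) F}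
    (hb : UpperTriInv b) (hb' : UpperTriInv b') : UpperTriInv (b * b') := by
  refine ⟨hb.1.mul hb'.1, ?_⟩
  intro i j hij
  rw [Matrix.mul_apply]
  apply Finset.sum_eq_zero
  intro x _
  by_cases hx : ((finSumFinEquiv x : Fin (n + n)) : ℕ) < ((finSumFinEquiv i : Fin (n + n)) : ℕ)
  · rw [hb.2 i x hx, zero_mul]
  · rw [hb'.2 x j (by omega), mul_zero]

lemma upperTriInv_blk (c d : F) (hc : c ≠ 0) (hd : d ≠ 0) (Y : Matrix (Fin n) (Fin n) F) :
    UpperTriInv (Matrix.fromBlocks (c • (1 : Matrix (Fin n) (Fin n) F)) Y 0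
      (d • (1 : Matrix (Fin n) (Fin n) F))) := by
  constructor
  · have hmul : Matrix.fromBlocks (c • (1 : Matrix (Fin n) (Fin n) F)) Y (0 : Matrix (Fin n) (Fin n) F) (d • 1) *
        Matrix.fromBlocks (c⁻¹ • (1 : Matrix (Fin n) (Fin n) F)) ((-(c⁻¹ * d⁻¹)) • Y) (0 : Matrix (Fin n) (Fin n) F)
          (d⁻¹ • 1) = 1 := by
      rw [Matrix.fromBlocks_multiply]
      have h1 : c • (1 : Matrix (Fin n) (Fin n) F) * (c⁻¹ • 1) + Y * 0 = 1 := by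
        rw [Matrix.mul_zero, add_zero, Matrix.smul_mul, Matrix.mul_smul, smul_smul,
          mul_inv_cancel₀ hc, one_smul, Matrix.one_mul]
      have h2 : c • (1 : Matrix (Fin n) (Fin n) F) * ((-(c⁻¹ * d⁻¹)) • Y) + Y * (d⁻¹ • 1) = 0 := by
        rw [Matrix.smul_mul, Matrix.one_mul, smul_smul, Matrix.mul_smul, Matrix.mul_one]
        have : c * -(c⁻¹ * d⁻¹) = -d⁻¹ := by field_simp
        rw [this, neg_smul, neg_add_cancel]
      have h3 : (0 : Matrix (Fin n) (Fin n) F) * (c⁻¹ • 1) + d • (1 : Matrix (Fin n) (Fin n) F) * 0 = 0 := by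
        rw [Matrix.zero_mul, Matrix.mul_zero, add_zero]
      have h4 : (0 : Matrix (Fin n) (Fin n) F) * ((-(c⁻¹ * d⁻¹)) • Y) +
          d • (1 : Matrix (Fin n) (Fin n) F) * (d⁻¹ • 1) = 1 := by
        rw [Matrix.zero_mul, zero_add, Matrix.smul_mul, Matrix.mul_smul, smul_smul,
          mul_inv_cancel₀ hd, one_smul, Matrix.one_mul]
      rw [h1, h2, h3, h4, Matrix.fromBlocks_one]
    exact (Matrix.isUnit_iff_isUnit_det _).mpr (Matrix.isUnit_det_of_right_inverse hmul)
  · rintro (i | i) (j | j) hij <;>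
      simp only [eLval, eRval] at hij <;>
      simp only [Matrix.fromBlocks_apply₁₁, Matrix.fromBlocks_apply₁₂,
        Matrix.fromBlocks_apply₂₁, Matrix.fromBlocks_apply₂₂, Matrix.smul_apply,
        Matrix.zero_apply, smul_eq_mul]
    · rw [Matrix.one_apply_ne (by intro h; subst h; omega), mul_zero]
    · omega
    · rw [Matrix.one_apply_ne (by intro h; subst h; omega), mul_zero]

def wnMat (n : ℕ) (F : Type*) [Field F] : Matrix (Fin n) (Fin n) F :=
  Matrix.of fun a b => if (a : ℕ) + (b : ℕ) + 1 = n then 1 else 0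

lemma wFull_eq : wFull n F = Matrix.fromBlocks 0 (wnMat n F) (wnMat n F) 0 := by
  ext i j
  rcases i with i | i <;> rcases j with j | j <;>
    simp only [wFull, wnMat, eLval, eRval, Matrix.fromBlocks_apply₁₁, Matrix.fromBlocks_apply₁₂,
      Matrix.fromBlocks_apply₂₁, Matrix.fromBlocks_apply₂₂, Matrix.zero_apply, Matrix.of_apply]
  · rw [if_neg (by omega)]
  · have : (i : ℕ) + (n + (j : ℕ)) + 1 = n + n ↔ (i : ℕ) + (j : ℕ) + 1 = n := by omega
    exact if_congr this rfl rfl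
  · have : (n + (i : ℕ)) + (j : ℕ) + 1 = n + n ↔ (i : ℕ) + (j : ℕ) + 1 = n := by omega
    exact if_congr this rfl rfl
  · rw [if_neg (by omega)]

lemma wn_mul_wn : wnMat n F * wnMat n F = 1 := by
  ext a b
  rw [Matrix.mul_apply]
  rw [Finset.sum_eq_single_of_mem (Fin.rev a) (Finset.mem_univ _)]
  · have h1 : wnMat n F a (Fin.rev a) = 1 := by
      simp only [wnMat, Matrix.of_apply]
      rw [if_pos (by rw [Fin.val_rev]; omega)]
    rw [h1, one_mul]
    simp only [wnMat, Matrix.of_apply, Matrix.one_apply, Fin.val_rev]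
    by_cases hab : a = b
    · subst hab; rw [if_pos (by omega), if_pos rfl]
    · rw [if_neg ?_, if_neg hab]
      have : (a : ℕ) ≠ (b : ℕ) := fun h => hab (Fin.ext h)
      omega
  · intro c _ hc
    have : wnMat n F a c = 0 := by
      simp only [wnMat, Matrix.of_apply]
      rw [if_neg ?_]
      intro h
      apply hc
      apply Fin.ext
      rw [Fin.val_rev]
      omega
    rw [this, zero_mul]

lemma wFull_mul_self : wFull n F * wFull n F = 1 := by
  rw [wFull_eq, Matrix.fromBlocks_multiply]
  simp only [Matrix.zero_mul, Matrix.mul_zero, add_zero, zero_add, wn_mul_wn]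
  exact Matrix.fromBlocks_one

lemma w_mul_t {ϖ : F} : wFull n F * tMat n F ϖ
    = iotaBlk 1 (ϖ • (1 : Matrix (Fin n) (Fin n) F)) * wFull n F := by
  rw [wFull_eq]
  unfold tMat iotaBlk
  rw [Matrix.fromBlocks_multiply, Matrix.fromBlocks_multiply]
  simp [Matrix.smul_mul, Matrix.mul_smul]

end Aux4

lemma fb_eq {R : Type*} {l m o p : Type*} {A A' : Matrix l o R} {B B' : Matrix l p R}
    {C C' : Matrix m o R} {D D' : Matrix m p R}
    (h1 : A = A') (h2 : B = B') (h3 : C = C') (h4 : D = D') :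
    Matrix.fromBlocks A B C D = Matrix.fromBlocks A' B' C' D' := by
  rw [h1, h2, h3, h4]

/-- A function `f` transforming by `χ` under `B(F)` on the left and invariant under `J` on
the right, supported on the Bruhat cell `B(F)·w·J`, is an eigenvector of the Hecke operator
`U = [J t J]`: summing the translates of `f` over coset representatives of `M_n(O)/ϖM_n(O)`
gives `χ(ι(1, ϖ·1))·f`. -/
theorem statement11
    (F : Type*) [Field F] (O : Subring F) (ϖ : F) (hϖO : ϖ ∈ O) (hϖ0 : ϖ ≠ 0)
    (v : F → ℤ)
    (hv_mul : ∀ x y : F, x ≠ 0 → y ≠ 0 → v (x * y) = v x + v y)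
    (hv_ϖ : v ϖ = 1)
    (hv_O : ∀ x : F, x ≠ 0 → (x ∈ O ↔ 0 ≤ v x))
    (n : ℕ) (hn : 1 ≤ n)
    (χ : Matrix (Fin n ⊕ Fin n) (Fin n ⊕ Fin n) F → ℂ)
    (hχ_mul : ∀ b b', UpperTriInv b → UpperTriInv b' → χ (b * b') = χ b * χ b')
    (hχ_triv : ∀ b, UpperTriInv b → inGLOS O b → χ b = 1)
    (f : Matrix (Fin n ⊕ Fin n) (Fin n ⊕ Fin n) F → ℂ)
    (hf_eq : ∀ b g k, UpperTriInv b → inParahoricS O ϖ k → f (b * g * k) = χ b * f g)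
    (hf_supp : ∀ g, (¬ ∃ b k, UpperTriInv b ∧ inParahoricS O ϖ k ∧
      g = b * wFull n F * k) → f g = 0)
    (Rep : Finset (Matrix (Fin n) (Fin n) O))
    (hRep : ∀ X : Matrix (Fin n) (Fin n) O,
      ∃! r, r ∈ Rep ∧ ∀ i j : Fin n, ∃ c : O, X i j - r i j = (⟨ϖ, hϖO⟩ : O) * c)
    (g : Matrix (Fin n ⊕ Fin n) (Fin n ⊕ Fin n) F) :
    ∑ m ∈ Rep, f (g * Matrix.fromBlocks 1 (m.map (fun x : O => (x : F))) 0 1 * tMat n F ϖ)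
      = χ (iotaBlk 1 (ϖ • (1 : Matrix (Fin n) (Fin n) F))) * f g := by
  classical
  have hπinv : ϖ⁻¹ * ϖ = 1 := inv_mul_cancel₀ hϖ0
  have hπinv' : ϖ * ϖ⁻¹ = 1 := mul_inv_cancel₀ hϖ0
  have hιUT : UpperTriInv (iotaBlk 1 (ϖ • (1 : Matrix (Fin n) (Fin n) F))) := by
    have h := upperTriInv_blk (1 : F) ϖ one_ne_zero hϖ0 (0 : Matrix (Fin n) (Fin n) F)
    rw [one_smul] at h
    exact h
  have httinv : tMat n F ϖ *
      (Matrix.fromBlocks (ϖ⁻¹ • (1 : Matrix (Fin n) (Fin n) F)) 0 0 1) = 1 := by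
    show Matrix.fromBlocks (ϖ • (1 : Matrix (Fin n) (Fin n) F)) 0 0 1 *
      Matrix.fromBlocks (ϖ⁻¹ • (1 : Matrix (Fin n) (Fin n) F)) 0 0 1 = 1
    rw [Matrix.fromBlocks_multiply]
    have t1 : ϖ • (1 : Matrix (Fin n) (Fin n) F) * (ϖ⁻¹ • 1) + 0 * 0 = 1 := by
      rw [Matrix.zero_mul, add_zero, Matrix.smul_mul, Matrix.mul_smul, smul_smul, hπinv',
        one_smul, Matrix.one_mul]
    have t2 : ϖ • (1 : Matrix (Fin n) (Fin n) F) * 0 + 0 * 1 = 0 := by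
      rw [Matrix.mul_zero, Matrix.zero_mul, add_zero]
    have t3 : (0 : Matrix (Fin n) (Fin n) F) * (ϖ⁻¹ • 1) + 1 * 0 = 0 := by
      rw [Matrix.zero_mul, Matrix.mul_zero, add_zero]
    have t4 : (0 : Matrix (Fin n) (Fin n) F) * 0 + 1 * 1 = 1 := by
      rw [Matrix.zero_mul, Matrix.one_mul, zero_add]
    rw [t1, t2, t3, t4, Matrix.fromBlocks_one]
  have huu : ∀ mF' : Matrix (Fin n) (Fin n) F,
      (Matrix.fromBlocks 1 mF' 0 1 : Matrix (Fin n ⊕ Fin n) (Fin n ⊕ Fin n) F) *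
        Matrix.fromBlocks 1 (-mF') 0 1 = 1 := by
    intro mF'
    rw [Matrix.fromBlocks_multiply]
    have t1 : (1 : Matrix (Fin n) (Fin n) F) * 1 + mF' * 0 = 1 := by
      rw [Matrix.one_mul, Matrix.mul_zero, add_zero]
    have t2 : (1 : Matrix (Fin n) (Fin n) F) * -mF' + mF' * 1 = 0 := by
      rw [Matrix.one_mul, Matrix.mul_one, neg_add_cancel]
    have t3 : (0 : Matrix (Fin n) (Fin n) F) * 1 + 1 * 0 = 0 := by
      rw [Matrix.zero_mul, Matrix.mul_zero, add_zero]
    have t4 : (0 : Matrix (Fin n) (Fin n) F) * -mF' + 1 * 1 = 1 := by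
      rw [Matrix.zero_mul, Matrix.one_mul, zero_add]
    rw [t1, t2, t3, t4, Matrix.fromBlocks_one]
  by_cases hg : ∃ b k, UpperTriInv b ∧ inParahoricS O ϖ k ∧ g = b * wFull n F * k
  · obtain ⟨b, k, hb, hk, hgeq⟩ := hg
    obtain ⟨Ak', hAkl, hAkr, hAk'O⟩ := parahoric_blockA hϖO hϖ0 hv_mul hv_ϖ hv_O hk
    obtain ⟨k', hkk', hk'k, hkO, hk'O⟩ := hk.1
    set A := k.toBlocks₁₁ with hA
    set Bb := k.toBlocks₁₂ with hBb
    set P := k.toBlocks₂₁ with hP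
    set D := k.toBlocks₂₂ with hD
    have hAO : ∀ i j, A i j ∈ O := fun i j => hkO _ _
    have hBbO : ∀ i j, Bb i j ∈ O := fun i j => hkO _ _
    have hPO : ∀ i j, P i j ∈ O := fun i j => hkO _ _
    have hDO : ∀ i j, D i j ∈ O := fun i j => hkO _ _
    have htm : tMat n F ϖ
        = Matrix.fromBlocks (ϖ • (1 : Matrix (Fin n) (Fin n) F)) 0 0 1 := rfl
    have hkut : ∀ mf : Matrix (Fin n) (Fin n) F,
        k * Matrix.fromBlocks 1 mf 0 1 * tMat n F ϖ
        = Matrix.fromBlocks (ϖ • A) (A * mf + Bb) (ϖ • P) (P * mf + D) := by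
      intro mf
      have s1 : k * Matrix.fromBlocks 1 mf 0 1
          = Matrix.fromBlocks A (A * mf + Bb) P (P * mf + D) := by
        conv_lhs => rw [← Matrix.fromBlocks_toBlocks k]
        rw [← hA, ← hBb, ← hP, ← hD, Matrix.fromBlocks_multiply]
        apply fb_eq
        · rw [Matrix.mul_one, Matrix.mul_zero, add_zero]
        · rw [Matrix.mul_one]
        · rw [Matrix.mul_one, Matrix.mul_zero, add_zero]
        · rw [Matrix.mul_one]
      rw [s1, htm, Matrix.fromBlocks_multiply]
      apply fb_eq
      · rw [Matrix.mul_zero, add_zero, Matrix.mul_smul, Matrix.mul_one]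
      · rw [Matrix.mul_zero, zero_add, Matrix.mul_one]
      · rw [Matrix.mul_zero, add_zero, Matrix.mul_smul, Matrix.mul_one]
      · rw [Matrix.mul_zero, zero_add, Matrix.mul_one]
    have hX0O : ∀ i j, (-(Ak' * Bb)) i j ∈ O := by
      intro i j
      rw [Matrix.neg_apply]
      exact neg_mem (matMulMem hAk'O hBbO i j)
    obtain ⟨r, ⟨hrRep, hrprop⟩, hruniq⟩ :=
      hRep (Matrix.of (fun i j => (⟨(-(Ak' * Bb)) i j, hX0O i j⟩ : O)))
    have hdich : ∀ m : Matrix (Fin n) (Fin n) O, m ∈ Rep →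
        ((∀ i j, ∃ c ∈ O,
          (A * (m.map (fun x : O => (x : F))) + Bb) i j = ϖ * c) ↔ m = r) := by
      intro m hm
      constructor
      · intro hdivm
        refine hruniq m ⟨hm, ?_⟩
        choose cF hcFO hcFeq using hdivm
        have hXm : A * (m.map (fun x : O => (x : F))) + Bb
            = ϖ • Matrix.of (fun a b => cF a b) := by
          ext a b
          rw [Matrix.smul_apply, Matrix.of_apply, smul_eq_mul]
          exact hcFeq a b
        have key : m.map (fun x : O => (x : F)) - (-(Ak' * Bb))
            = ϖ • (Ak' * Matrix.of (fun a b => cF a b)) := by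
          have e1 : Ak' * (A * (m.map (fun x : O => (x : F))) + Bb)
              = m.map (fun x : O => (x : F)) - (-(Ak' * Bb)) := by
            rw [Matrix.mul_add, ← Matrix.mul_assoc, hAkr, Matrix.one_mul, sub_neg_eq_add]
          rw [← e1, hXm, Matrix.mul_smul]
        intro i j
        refine ⟨⟨-((Ak' * Matrix.of (fun a b => cF a b)) i j),
          neg_mem (matMulMem hAk'O (fun a b => hcFO a b) i j)⟩, ?_⟩
        apply Subtype.ext
        push_cast
        have e2 := congrFun (congrFun key i) j
        simp only [Matrix.sub_apply, Matrix.smul_apply, smul_eq_mul] at e2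
        show (-(Ak' * Bb)) i j - ((m i j : O) : F) = ϖ * _
        have e3 : ((m i j : O) : F) = (m.map (fun x : O => (x : F))) i j := rfl
        rw [e3]
        linear_combination -e2
      · intro hmr
        subst hmr
        choose cO hcOeq using hrprop
        have hXrel : (-(Ak' * Bb)) - m.map (fun x : O => (x : F))
            = ϖ • Matrix.of (fun a b => ((cO a b : O) : F)) := by
          ext a b
          have e4 := congrArg (fun x : O => (x : F)) (hcOeq a b)
          push_cast at e4
          simp only [Matrix.sub_apply, Matrix.smul_apply, Matrix.of_apply, smul_eq_mul]
          have e5 : ((m a b : O) : F) = (m.map (fun x : O => (x : F))) a b := rfl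
          have e8 : (((Matrix.of (fun i j => (⟨(-(Ak' * Bb)) i j, hX0O i j⟩ : O)) :
              Matrix (Fin n) (Fin n) O) a b : O) : F) = (-(Ak' * Bb)) a b := rfl
          rw [e8] at e4
          rw [← e5]
          linear_combination e4
        have hXr : A * (m.map (fun x : O => (x : F))) + Bb
            = ϖ • (-(A * Matrix.of (fun a b => ((cO a b : O) : F)))) := by
          have e6 : A * (m.map (fun x : O => (x : F))) + Bb
              = A * (m.map (fun x : O => (x : F)) - (-(Ak' * Bb))) := by
            rw [Matrix.mul_sub, Matrix.mul_neg, sub_neg_eq_add, ← Matrix.mul_assoc, hAkl,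
              Matrix.one_mul]
          have e7 : m.map (fun x : O => (x : F)) - (-(Ak' * Bb))
              = -(ϖ • Matrix.of (fun a b => ((cO a b : O) : F))) := by
            rw [← hXrel, neg_sub]
          rw [e6, e7, Matrix.mul_neg, Matrix.mul_smul, smul_neg]
        intro i j
        refine ⟨(-(A * Matrix.of (fun a b => ((cO a b : O) : F)))) i j,
          by rw [Matrix.neg_apply]
             exact neg_mem (matMulMem hAO (fun a b => SetLike.coe_mem _) i j), ?_⟩
        rw [hXr, Matrix.smul_apply, smul_eq_mul]
    have hside : ∀ m ∈ Rep, m ≠ r →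
        f (g * Matrix.fromBlocks 1 (m.map (fun x : O => (x : F))) 0 1 * tMat n F ϖ) = 0 := by
      intro m hm hne
      apply hf_supp
      rintro ⟨b2, k2, hb2, hk2, hEq⟩
      apply hne
      apply (hdich m hm).mp
      obtain ⟨A2', hA2l, hA2r, hA2O⟩ := parahoric_blockA hϖO hϖ0 hv_mul hv_ϖ hv_O hk2
      have hB2O : ∀ i j, k2.toBlocks₁₂ i j ∈ O := by
        obtain ⟨k2', h1, h2, h3, h4⟩ := hk2.1
        exact fun i j => h3 _ _
      have hbdet : IsUnit b.det := (Matrix.isUnit_iff_isUnit_det b).mp hb.1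
      have hbinv2 : b⁻¹ * b = 1 := Matrix.nonsing_inv_mul b hbdet
      have hbBT : b.BlockTriangular (fun i => ((finSumFinEquiv i : Fin (n + n)) : ℕ)) :=
        fun i j hij => hb.2 i j hij
      have hbtri : ∀ a c, b⁻¹ (Sum.inr a) (Sum.inl c) = 0 := by
        haveI := b.invertibleOfIsUnitDet hbdet
        have h := Matrix.blockTriangular_inv_of_blockTriangular hbBT
        intro a c
        exact h (by simp only [eLval, eRval]; omega)
      have h1 : b * (wFull n F *
          (k * Matrix.fromBlocks 1 (m.map (fun x : O => (x : F))) 0 1 * tMat n F ϖ))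
          = b2 * wFull n F * k2 := by
        rw [← hEq, hgeq]
        simp only [Matrix.mul_assoc]
      have hS : k * Matrix.fromBlocks 1 (m.map (fun x : O => (x : F))) 0 1 * tMat n F ϖ
          = wFull n F * (b⁻¹ * b2) * wFull n F * k2 := by
        have h2 : wFull n F * (b⁻¹ * (b * (wFull n F *
            (k * Matrix.fromBlocks 1 (m.map (fun x : O => (x : F))) 0 1 * tMat n F ϖ))))
            = k * Matrix.fromBlocks 1 (m.map (fun x : O => (x : F))) 0 1 * tMat n F ϖ := by
          rw [← Matrix.mul_assoc b⁻¹ b, hbinv2, Matrix.one_mul,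
            ← Matrix.mul_assoc (wFull n F) (wFull n F), wFull_mul_self, Matrix.one_mul]
        rw [← h2, h1]
        simp only [Matrix.mul_assoc]
      set β := b⁻¹ * b2 with hβ
      have hβ21 : ∀ a c, β (Sum.inr a) (Sum.inl c) = 0 := by
        intro a c
        rw [hβ, Matrix.mul_apply]
        apply Finset.sum_eq_zero
        rintro (x | x) _
        · rw [hbtri a x, zero_mul]
        · rw [hb2.2 (Sum.inr x) (Sum.inl c) (by simp only [eLval, eRval]; omega), mul_zero]
      have hβ21M : β.toBlocks₂₁ = 0 := by
        ext a c
        exact hβ21 a c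
      have hsplit : wFull n F * β * wFull n F =
          Matrix.fromBlocks (wnMat n F * (β.toBlocks₂₂ * wnMat n F)) 0
            (wnMat n F * (β.toBlocks₁₂ * wnMat n F))
            (wnMat n F * (β.toBlocks₁₁ * wnMat n F)) := by
        conv_lhs => rw [← Matrix.fromBlocks_toBlocks β]
        rw [wFull_eq, Matrix.fromBlocks_multiply, Matrix.fromBlocks_multiply, hβ21M]
        apply fb_eq <;>
          simp only [Matrix.zero_mul, Matrix.mul_zero, zero_add, add_zero, Matrix.mul_assoc]
      rw [hkut (m.map (fun x : O => (x : F))), hsplit] at hS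
      rw [← Matrix.fromBlocks_toBlocks k2, Matrix.fromBlocks_multiply] at hS
      obtain ⟨e11, e12, -, -⟩ := Matrix.fromBlocks_inj.mp hS
      rw [Matrix.zero_mul, add_zero] at e11
      rw [Matrix.zero_mul, add_zero] at e12
      have hΛ1 : wnMat n F * (β.toBlocks₂₂ * wnMat n F) = ϖ • (A * A2') := by
        calc wnMat n F * (β.toBlocks₂₂ * wnMat n F)
            = wnMat n F * (β.toBlocks₂₂ * wnMat n F) * (k2.toBlocks₁₁ * A2') := by
              rw [hA2l, Matrix.mul_one]
          _ = (wnMat n F * (β.toBlocks₂₂ * wnMat n F) * k2.toBlocks₁₁) * A2' := by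
              simp only [Matrix.mul_assoc]
          _ = (ϖ • A) * A2' := by rw [← e11]
          _ = ϖ • (A * A2') := by rw [Matrix.smul_mul]
      have hXm : A * (m.map (fun x : O => (x : F))) + Bb
          = ϖ • (A * A2' * k2.toBlocks₁₂) := by
        rw [e12, hΛ1, Matrix.smul_mul, Matrix.mul_assoc]
      intro i j
      exact ⟨(A * A2' * k2.toBlocks₁₂) i j, matMulMem (matMulMem hAO hA2O) hB2O i j,
        by rw [hXm, Matrix.smul_apply, smul_eq_mul]⟩
    rw [Finset.sum_eq_single_of_mem r hrRep hside]
    have hdivr := (hdich r hrRep).mpr rfl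
    choose cR hcRO hcReq using hdivr
    have hXr : A * (r.map (fun x : O => (x : F))) + Bb
        = ϖ • Matrix.of (fun a b => cR a b) := by
      ext a b
      rw [Matrix.smul_apply, Matrix.of_apply, smul_eq_mul]
      exact hcReq a b
    have hid2 : k * Matrix.fromBlocks 1 (r.map (fun x : O => (x : F))) 0 1 * tMat n F ϖ
        = tMat n F ϖ * Matrix.fromBlocks A (Matrix.of (fun a b => cR a b)) (ϖ • P)
            (P * (r.map (fun x : O => (x : F))) + D) := by
      rw [hkut, htm, Matrix.fromBlocks_multiply]
      apply fb_eq
      · rw [Matrix.zero_mul, add_zero, Matrix.smul_mul, Matrix.one_mul]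
      · rw [Matrix.zero_mul, add_zero, Matrix.smul_mul, Matrix.one_mul, hXr]
      · rw [Matrix.zero_mul, zero_add, Matrix.one_mul]
      · rw [Matrix.zero_mul, zero_add, Matrix.one_mul]
    have hk1O : ∀ i j, (Matrix.fromBlocks A (Matrix.of (fun a b => cR a b)) (ϖ • P)
        (P * (r.map (fun x : O => (x : F))) + D)) i j ∈ O := by
      rintro (i | i) (j | j)
      · exact hAO i j
      · exact hcRO i j
      · show (ϖ • P) i j ∈ O
        rw [Matrix.smul_apply, smul_eq_mul]
        exact mul_mem hϖO (hPO i j)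
      · show (P * (r.map (fun x : O => (x : F))) + D) i j ∈ O
        rw [Matrix.add_apply]
        exact add_mem (matMulMem hPO (fun a b => SetLike.coe_mem _) i j) (hDO i j)
    have hdt : (tMat n F ϖ).det = ϖ ^ n := by
      rw [htm, Matrix.det_fromBlocks_zero₂₁, Matrix.det_one, mul_one, Matrix.det_smul,
        Matrix.det_one, mul_one, Fintype.card_fin]
    have hdetu : (Matrix.fromBlocks 1 (r.map (fun x : O => (x : F))) 0 1 :
        Matrix (Fin n ⊕ Fin n) (Fin n ⊕ Fin n) F).det = 1 := by
      rw [Matrix.det_fromBlocks_zero₂₁, Matrix.det_one, mul_one]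
    have hdetk : k.det * k'.det = 1 := by rw [← Matrix.det_mul, hkk', Matrix.det_one]
    have hdk1 : (Matrix.fromBlocks A (Matrix.of (fun a b => cR a b)) (ϖ • P)
        (P * (r.map (fun x : O => (x : F))) + D)).det = k.det := by
      have h6 := congrArg Matrix.det hid2
      rw [Matrix.det_mul, Matrix.det_mul, Matrix.det_mul, hdt, hdetu, mul_one] at h6
      refine mul_left_cancel₀ (pow_ne_zero n hϖ0) ?_
      linear_combination -h6
    obtain ⟨K1', h1', h2', h3'⟩ := GLO_of hk1O (detMem hk'O) (by rw [hdk1]; exact hdetk)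
    have hk1J : inParahoricS O ϖ (Matrix.fromBlocks A (Matrix.of (fun a b => cR a b)) (ϖ • P)
        (P * (r.map (fun x : O => (x : F))) + D)) := by
      refine ⟨⟨K1', h1', h2', hk1O, h3'⟩, ?_⟩
      intro i j
      refine ⟨P i j, hPO i j, ?_⟩
      show (ϖ • P) i j = ϖ * P i j
      rw [Matrix.smul_apply, smul_eq_mul]
    have hfg : f g = χ b * f (wFull n F) := by
      rw [hgeq]
      exact hf_eq b (wFull n F) k hb hk
    have hterm : g * Matrix.fromBlocks 1 (r.map (fun x : O => (x : F))) 0 1 * tMat n F ϖ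
        = (b * iotaBlk 1 (ϖ • (1 : Matrix (Fin n) (Fin n) F))) * wFull n F *
          (Matrix.fromBlocks A (Matrix.of (fun a b => cR a b)) (ϖ • P)
            (P * (r.map (fun x : O => (x : F))) + D)) := by
      calc g * Matrix.fromBlocks 1 (r.map (fun x : O => (x : F))) 0 1 * tMat n F ϖ
          = b * wFull n F * k * Matrix.fromBlocks 1 (r.map (fun x : O => (x : F))) 0 1 *
            tMat n F ϖ := by rw [hgeq]
        _ = b * (wFull n F *
            (k * Matrix.fromBlocks 1 (r.map (fun x : O => (x : F))) 0 1 * tMat n F ϖ)) := by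
            simp only [Matrix.mul_assoc]
        _ = b * (wFull n F * (tMat n F ϖ *
            Matrix.fromBlocks A (Matrix.of (fun a b => cR a b)) (ϖ • P)
              (P * (r.map (fun x : O => (x : F))) + D))) := by rw [hid2]
        _ = b * ((wFull n F * tMat n F ϖ) *
            Matrix.fromBlocks A (Matrix.of (fun a b => cR a b)) (ϖ • P)
              (P * (r.map (fun x : O => (x : F))) + D)) := by rw [Matrix.mul_assoc]
        _ = b * ((iotaBlk 1 (ϖ • (1 : Matrix (Fin n) (Fin n) F)) * wFull n F) *
            Matrix.fromBlocks A (Matrix.of (fun a b => cR a b)) (ϖ • P)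
              (P * (r.map (fun x : O => (x : F))) + D)) := by rw [w_mul_t]
        _ = (b * iotaBlk 1 (ϖ • (1 : Matrix (Fin n) (Fin n) F))) * wFull n F *
            (Matrix.fromBlocks A (Matrix.of (fun a b => cR a b)) (ϖ • P)
              (P * (r.map (fun x : O => (x : F))) + D)) := by simp only [Matrix.mul_assoc]
    rw [hterm, hf_eq _ _ _ (UpperTriInv.mul' hb hιUT) hk1J,
      hχ_mul b _ hb hιUT, hfg]
    ring

  · rw [hf_supp g hg, mul_zero]
    apply Finset.sum_eq_zero
    intro m hm
    apply hf_supp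
    rintro ⟨b2, k2, hb2, hk2, hEq⟩
    apply hg
    obtain ⟨A2', hA2l, hA2r, hA2O⟩ := parahoric_blockA hϖO hϖ0 hv_mul hv_ϖ hv_O hk2
    obtain ⟨⟨k2', hkk', hk'k, hkO, hk'O⟩, hdiv⟩ := hk2
    set A := k2.toBlocks₁₁ with hA
    set Bb := k2.toBlocks₁₂ with hBb
    set P := k2.toBlocks₂₁ with hP
    set D := k2.toBlocks₂₂ with hD
    have hAO : ∀ i j, A i j ∈ O := fun i j => hkO _ _
    have hBbO : ∀ i j, Bb i j ∈ O := fun i j => hkO _ _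
    have hPO : ∀ i j, P i j ∈ O := fun i j => hkO _ _
    have hDO : ∀ i j, D i j ∈ O := fun i j => hkO _ _
    obtain ⟨CO, hCOO, hPCO⟩ : ∃ CO : Matrix (Fin n) (Fin n) F,
        (∀ i j, CO i j ∈ O) ∧ P = ϖ • CO := by
      choose c hc hEqc using hdiv
      refine ⟨Matrix.of c, hc, ?_⟩
      ext i j
      exact hEqc i j
    set mF := m.map (fun x : O => (x : F)) with hmF
    have hmFO : ∀ i j, mF i j ∈ O := fun i j => SetLike.coe_mem _
    set X2 := ϖ • Bb - A * mF with hX2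
    set E2 := D - ϖ • (CO * A2' * Bb) with hE2
    have hX2O : ∀ i j, X2 i j ∈ O := by
      intro i j
      simp only [hX2, Matrix.sub_apply, Matrix.smul_apply, smul_eq_mul]
      exact sub_mem (mul_mem hϖO (hBbO i j)) (matMulMem hAO hmFO i j)
    have hE2O : ∀ i j, E2 i j ∈ O := by
      intro i j
      simp only [hE2, Matrix.sub_apply, Matrix.smul_apply, smul_eq_mul]
      exact sub_mem (hDO i j) (mul_mem hϖO (matMulMem (matMulMem hCOO hA2O) hBbO i j))
    have hdetk2 : k2.det * k2'.det = 1 := by rw [← Matrix.det_mul, hkk', Matrix.det_one]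
    have hfact : k2 = Matrix.fromBlocks A 0 P 1 * Matrix.fromBlocks 1 (A2' * Bb) 0 E2 := by
      conv_lhs => rw [← Matrix.fromBlocks_toBlocks k2]
      rw [← hA, ← hBb, ← hP, ← hD, Matrix.fromBlocks_multiply]
      apply fb_eq
      · rw [Matrix.mul_one, Matrix.zero_mul, add_zero]
      · rw [Matrix.zero_mul, add_zero, ← Matrix.mul_assoc, hA2l, Matrix.one_mul]
      · rw [Matrix.mul_one, Matrix.mul_zero, add_zero]
      · rw [Matrix.one_mul, hPCO, Matrix.smul_mul, ← Matrix.mul_assoc, hE2]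
        abel
    have hdetfact : k2.det = A.det * E2.det := by
      rw [hfact, Matrix.det_mul]
      rw [Matrix.det_fromBlocks_zero₁₂]
      rw [Matrix.det_fromBlocks_zero₂₁]
      rw [Matrix.det_one, mul_one, one_mul]
    have hdetE2 : E2.det * (A.det * k2'.det) = 1 := by
      have h9 : A.det * E2.det * k2'.det = 1 := by rw [← hdetfact]; exact hdetk2
      calc E2.det * (A.det * k2'.det) = A.det * E2.det * k2'.det := by ring
        _ = 1 := h9
    obtain ⟨E2', hE2l, hE2r, hE2'O⟩ :=
      GLO_of hE2O (mul_mem (detMem hAO) (detMem hk'O)) hdetE2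
    set κ := Matrix.fromBlocks A X2 0 E2 with hκ
    have hκJ : inParahoricS O ϖ κ := by
      refine ⟨⟨Matrix.fromBlocks A2' (-(A2' * (X2 * E2'))) 0 E2', ?_, ?_, ?_, ?_⟩, ?_⟩
      · rw [hκ, Matrix.fromBlocks_multiply]
        have t1 : A * A2' + X2 * 0 = 1 := by rw [Matrix.mul_zero, add_zero, hA2l]
        have t2 : A * -(A2' * (X2 * E2')) + X2 * E2' = 0 := by
          rw [Matrix.mul_neg, ← Matrix.mul_assoc, hA2l, Matrix.one_mul, neg_add_cancel]
        have t3 : (0 : Matrix (Fin n) (Fin n) F) * A2' + E2 * 0 = 0 := by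
          rw [Matrix.zero_mul, Matrix.mul_zero, add_zero]
        have t4 : (0 : Matrix (Fin n) (Fin n) F) * -(A2' * (X2 * E2')) + E2 * E2' = 1 := by
          rw [Matrix.zero_mul, zero_add, hE2l]
        rw [t1, t2, t3, t4, Matrix.fromBlocks_one]
      · rw [hκ, Matrix.fromBlocks_multiply]
        have t1 : A2' * A + -(A2' * (X2 * E2')) * 0 = 1 := by
          rw [Matrix.mul_zero, add_zero, hA2r]
        have t2 : A2' * X2 + -(A2' * (X2 * E2')) * E2 = 0 := by
          rw [Matrix.neg_mul, Matrix.mul_assoc A2' (X2 * E2') E2,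
            Matrix.mul_assoc X2 E2' E2, hE2r, Matrix.mul_one, add_neg_cancel]
        have t3 : (0 : Matrix (Fin n) (Fin n) F) * A + E2' * 0 = 0 := by
          rw [Matrix.zero_mul, Matrix.mul_zero, add_zero]
        have t4 : (0 : Matrix (Fin n) (Fin n) F) * X2 + E2' * E2 = 1 := by
          rw [Matrix.zero_mul, zero_add, hE2r]
        rw [t1, t2, t3, t4, Matrix.fromBlocks_one]
      · rintro (i | i) (j | j)
        · exact hAO i j
        · exact hX2O i j
        · exact zero_mem O
        · exact hE2O i j
      · rintro (i | i) (j | j)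
        · exact hA2O i j
        · show (-(A2' * (X2 * E2'))) i j ∈ O
          rw [Matrix.neg_apply]
          exact neg_mem (matMulMem hA2O (matMulMem hX2O hE2'O) i j)
        · exact zero_mem O
        · exact hE2'O i j
      · intro i j
        refine ⟨0, zero_mem O, ?_⟩
        rw [hκ]
        show (0 : Matrix (Fin n) (Fin n) F) i j = ϖ * 0
        rw [Matrix.zero_apply, mul_zero]
    set L2 := Matrix.fromBlocks (ϖ⁻¹ • (1 : Matrix (Fin n) (Fin n) F))
      (0 : Matrix (Fin n) (Fin n) F) (CO * A2') (1 : Matrix (Fin n) (Fin n) F) with hL2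
    have hid : k2 * Matrix.fromBlocks (ϖ⁻¹ • (1 : Matrix (Fin n) (Fin n) F)) 0 0 1 *
        Matrix.fromBlocks 1 (-mF) 0 1 = L2 * κ := by
      have step1 : k2 * Matrix.fromBlocks (ϖ⁻¹ • (1 : Matrix (Fin n) (Fin n) F)) 0 0 1
          = Matrix.fromBlocks (ϖ⁻¹ • A) Bb CO D := by
        conv_lhs => rw [← Matrix.fromBlocks_toBlocks k2]
        rw [← hA, ← hBb, ← hP, ← hD, Matrix.fromBlocks_multiply]
        apply fb_eq
        · rw [Matrix.mul_zero, add_zero, Matrix.mul_smul, Matrix.mul_one]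
        · rw [Matrix.mul_zero, Matrix.mul_one, zero_add]
        · rw [Matrix.mul_zero, add_zero, Matrix.mul_smul, Matrix.mul_one, hPCO, smul_smul,
            hπinv, one_smul]
        · rw [Matrix.mul_zero, Matrix.mul_one, zero_add]
      rw [step1, hL2, hκ, Matrix.fromBlocks_multiply, Matrix.fromBlocks_multiply]
      apply fb_eq
      · rw [Matrix.mul_one, Matrix.mul_zero, add_zero, Matrix.mul_zero, add_zero,
          Matrix.smul_mul, Matrix.one_mul]
      · rw [Matrix.mul_one, Matrix.zero_mul, add_zero]
        rw [Matrix.smul_mul, Matrix.smul_mul, Matrix.one_mul]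
        rw [hX2, smul_sub, smul_smul, hπinv, one_smul]
        rw [Matrix.mul_neg, smul_neg, neg_add_eq_sub]
      · rw [Matrix.mul_one, Matrix.mul_zero, add_zero, Matrix.mul_zero, add_zero,
          Matrix.mul_assoc, hA2r, Matrix.mul_one]
      · rw [Matrix.mul_one, Matrix.one_mul, Matrix.mul_neg, hX2, hE2, Matrix.mul_sub,
          Matrix.mul_smul]
        have hmm1 : CO * A2' * (A * mF) = CO * mF := by
          rw [← Matrix.mul_assoc, Matrix.mul_assoc CO A2' A, hA2r, Matrix.mul_one]
        rw [hmm1]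
        abel
    set Y3 := wnMat n F * (CO * A2') * wnMat n F with hY3
    set b3m := Matrix.fromBlocks (1 : Matrix (Fin n) (Fin n) F) Y3 0
      (ϖ⁻¹ • (1 : Matrix (Fin n) (Fin n) F)) with hb3m
    have hb3UT : UpperTriInv b3m := by
      have h := upperTriInv_blk (1 : F) ϖ⁻¹ one_ne_zero (inv_ne_zero hϖ0) Y3
      rw [one_smul] at h
      rw [hb3m]
      exact h
    have hwL2 : wFull n F * L2 = b3m * wFull n F := by
      rw [wFull_eq, hL2, hb3m, Matrix.fromBlocks_multiply, Matrix.fromBlocks_multiply]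
      apply fb_eq
      · rw [Matrix.zero_mul, zero_add, Matrix.mul_zero, zero_add, hY3,
          Matrix.mul_assoc (wnMat n F * (CO * A2')) (wnMat n F) (wnMat n F), wn_mul_wn,
          Matrix.mul_one]
      · rw [Matrix.zero_mul, zero_add, Matrix.mul_one, Matrix.one_mul, Matrix.mul_zero,
          add_zero]
      · rw [Matrix.zero_mul, add_zero, Matrix.zero_mul, zero_add, Matrix.mul_smul,
          Matrix.mul_one, Matrix.smul_mul, Matrix.one_mul]
      · rw [Matrix.mul_zero, Matrix.zero_mul, add_zero, Matrix.zero_mul, Matrix.mul_zero,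
          add_zero]
    have hmain : g * Matrix.fromBlocks 1 mF 0 1 * tMat n F ϖ *
        Matrix.fromBlocks (ϖ⁻¹ • (1 : Matrix (Fin n) (Fin n) F)) 0 0 1 *
        Matrix.fromBlocks 1 (-mF) 0 1 = g := by
      rw [Matrix.mul_assoc (g * Matrix.fromBlocks 1 mF 0 1) (tMat n F ϖ), httinv,
        Matrix.mul_one, Matrix.mul_assoc, huu, Matrix.mul_one]
    refine ⟨b2 * b3m, κ, UpperTriInv.mul' hb2 hb3UT, hκJ, ?_⟩
    calc g = g * Matrix.fromBlocks 1 mF 0 1 * tMat n F ϖ *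
          Matrix.fromBlocks (ϖ⁻¹ • (1 : Matrix (Fin n) (Fin n) F)) 0 0 1 *
          Matrix.fromBlocks 1 (-mF) 0 1 := hmain.symm
      _ = b2 * wFull n F * k2 *
          Matrix.fromBlocks (ϖ⁻¹ • (1 : Matrix (Fin n) (Fin n) F)) 0 0 1 *
          Matrix.fromBlocks 1 (-mF) 0 1 := by rw [hEq]
      _ = b2 * (wFull n F * (k2 *
          Matrix.fromBlocks (ϖ⁻¹ • (1 : Matrix (Fin n) (Fin n) F)) 0 0 1 *
          Matrix.fromBlocks 1 (-mF) 0 1)) := by simp only [Matrix.mul_assoc]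
      _ = b2 * (wFull n F * (L2 * κ)) := by rw [hid]
      _ = b2 * ((wFull n F * L2) * κ) := by rw [Matrix.mul_assoc]
      _ = b2 * ((b3m * wFull n F) * κ) := by rw [hwL2]
      _ = b2 * b3m * wFull n F * κ := by simp only [Matrix.mul_assoc]
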